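/- Let X₁,...,Xₖ be sampled without replacement from a finite population c₁,...,c_N of elements of ℝ^d (i.e., (X₁,...,Xₖ) is a uniformly random ordered k-subset), and Y₁,...,Yₖ be sampled with replacement (i.i.d. uniform on the population). Then for every convex function f : ℝ^d → ℝ, E[f(∑ᵢ Xᵢ)] ≤ E[f(∑ᵢ Yᵢ)]. -/

import Mathlib

open Finset

lemma exists_perm_comp {N k : ℕ} (hk : k ≤ N) (π : Fin k → Fin N)
    (hπ : Function.Injective π) :
    ∃ σ : Equiv.Perm (Fin N), ∀ i, σ (Fin.castLE hk i) = π i := by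
  classical
  have hc : Function.Injective (Fin.castLE hk) := Fin.castLE_injective hk
  let e : {x : Fin N // x ∈ Set.range (Fin.castLE hk)} ≃ {x : Fin N // x ∈ Set.range π} :=
    (Equiv.ofInjective _ hc).symm.trans (Equiv.ofInjective π hπ)
  refine ⟨e.extendSubtype, fun i => ?_⟩
  rw [Equiv.extendSubtype_apply_of_mem e _ ⟨i, rfl⟩]
  simp [e, Equiv.ofInjective]
  haveI : Nonempty (Fin k) := ⟨i⟩
  congr 1
  exact Function.leftInverse_invFun hc i

lemma sum_perm_fiber {N k : ℕ} (hk : k ≤ N) :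
    ∃ M : ℕ, 0 < M ∧ ∀ (G : (Fin k → Fin N) → ℝ),
      ∑ σ : Equiv.Perm (Fin N), G (σ ∘ Fin.castLE hk)
        = M • ∑ π ∈ univ.filter (fun π : Fin k → Fin N => Function.Injective π), G π := by
  classical
  set Φ : Equiv.Perm (Fin N) → (Fin k → Fin N) := fun σ => σ ∘ Fin.castLE hk with hΦ
  have key : ∀ b : Fin k → Fin N, Function.Injective b → ∀ b', Function.Injective b' →
      (univ.filter fun σ : Equiv.Perm (Fin N) => Φ σ = b).card
        = (univ.filter fun σ : Equiv.Perm (Fin N) => Φ σ = b').card := by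
    intro b hb b' hb'
    obtain ⟨σb, hσb⟩ := exists_perm_comp hk b hb
    obtain ⟨σb', hσb'⟩ := exists_perm_comp hk b' hb'
    refine Finset.card_bij' (fun σ _ => σb' * σb⁻¹ * σ) (fun σ _ => σb * σb'⁻¹ * σ)
      ?_ ?_ ?_ ?_
    · intro σ hσ
      simp only [mem_filter, mem_univ, true_and] at hσ ⊢
      funext i
      have h1 : σ (Fin.castLE hk i) = b i := congrFun hσ i
      simp only [Φ, Function.comp_apply, Equiv.Perm.mul_apply, h1, ← hσb,
        Equiv.Perm.inv_def, Equiv.symm_apply_apply, hσb']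
    · intro σ hσ
      simp only [mem_filter, mem_univ, true_and] at hσ ⊢
      funext i
      have h1 : σ (Fin.castLE hk i) = b' i := congrFun hσ i
      simp only [Φ, Function.comp_apply, Equiv.Perm.mul_apply, h1, ← hσb',
        Equiv.Perm.inv_def, Equiv.symm_apply_apply, hσb]
    · intro σ _; group
    · intro σ _; group
  have hcastinj : Function.Injective (Fin.castLE hk) := Fin.castLE_injective hk
  refine ⟨(univ.filter fun σ : Equiv.Perm (Fin N) => Φ σ = Fin.castLE hk).card, ?_, ?_⟩
  · refine Finset.card_pos.2 ⟨1, ?_⟩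
    simp only [mem_filter, mem_univ, true_and, Φ]
    rfl
  · intro G
    have hmaps : ∀ σ : Equiv.Perm (Fin N), σ ∈ (univ : Finset (Equiv.Perm (Fin N))) →
        Φ σ ∈ univ.filter (fun π : Fin k → Fin N => Function.Injective π) := by
      intro σ _
      simp only [mem_filter, mem_univ, true_and]
      exact σ.injective.comp hcastinj
    have hfib := Finset.sum_fiberwise_of_maps_to hmaps (fun σ => G (Φ σ))
    have : (∑ σ : Equiv.Perm (Fin N), G (σ ∘ Fin.castLE hk))
        = ∑ b ∈ univ.filter (fun π : Fin k → Fin N => Function.Injective π),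
            ∑ σ ∈ univ.filter (fun σ : Equiv.Perm (Fin N) => Φ σ = b), G (Φ σ) := hfib.symm
    rw [this, Finset.smul_sum]
    refine Finset.sum_congr rfl ?_
    intro b hb
    simp only [mem_filter, mem_univ, true_and] at hb
    have : ∀ σ ∈ univ.filter (fun σ : Equiv.Perm (Fin N) => Φ σ = b), G (Φ σ) = G b := by
      intro σ hσ
      simp only [mem_filter, mem_univ, true_and] at hσ
      rw [hσ]
    rw [Finset.sum_congr rfl this, Finset.sum_const, key b hb _ hcastinj]
lemma main_ineq {N k d : ℕ} (hk : k ≤ N) (hk0 : 0 < k) (c : Fin N → (Fin d → ℝ))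
    (f : (Fin d → ℝ) → ℝ) (hf : ConvexOn ℝ Set.univ f) (J : Fin k → Fin N) :
    ∑ σ : Equiv.Perm (Fin N), f (∑ i, c (σ (Fin.castLE hk i)))
      ≤ ∑ σ : Equiv.Perm (Fin N), f (∑ i, c (σ (J i))) := by
  classical
  set T : Finset (Equiv.Perm (Fin N)) :=
    univ.filter (fun τ : Equiv.Perm (Fin N) => ∀ i : Fin k, ((τ (J i) : ℕ) < k)) with hT
  -- T is nonempty
  have hTne : T.Nonempty := by
    set s : Finset (Fin N) := univ.image J with hs
    have hmk : s.card ≤ k := (Finset.card_image_le).trans (by simp)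
    have hm : s.card ≤ N := hmk.trans hk
    have einj : Function.Injective (fun j : Fin s.card => ((s.orderIsoOfFin rfl j : Fin N))) := by
      intro a b hab
      exact (s.orderIsoOfFin rfl).injective (Subtype.ext hab)
    obtain ⟨σe, hσe⟩ := exists_perm_comp hm _ einj
    refine ⟨σe⁻¹, ?_⟩
    simp only [hT, mem_filter, mem_univ, true_and]
    intro i
    have hJ : J i ∈ s := Finset.mem_image_of_mem _ (mem_univ i)
    set j : Fin s.card := (s.orderIsoOfFin rfl).symm ⟨J i, hJ⟩ with hj
    have hej : ((s.orderIsoOfFin rfl j : Fin N)) = J i := by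
      simp [hj]
    have : σe⁻¹ (J i) = Fin.castLE hm j := by
      rw [← hej, ← hσe j, Equiv.Perm.inv_def, Equiv.symm_apply_apply]
    rw [this]
    exact lt_of_lt_of_le j.2 hmk
  have hTpos : 0 < T.card := Finset.card_pos.2 hTne
  have hkR : (k : ℝ) ≠ 0 := Nat.cast_ne_zero.2 hk0.ne'
  have hTR : (T.card : ℝ) ≠ 0 := Nat.cast_ne_zero.2 hTpos.ne'
  set K : Finset (Fin N) := univ.filter (fun t : Fin N => (t : ℕ) < k) with hKdef
  have hcastinj : Function.Injective (Fin.castLE hk) := Fin.castLE_injective hk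
  have hKimg : K = univ.image (Fin.castLE hk) := by
    ext t
    simp only [hKdef, mem_filter, mem_univ, true_and, mem_image]
    constructor
    · intro ht
      refine ⟨⟨t.val, ht⟩, ?_⟩
      ext; simp
    · rintro ⟨i, rfl⟩
      simpa using i.2
  have hKcard : K.card = k := by
    rw [hKimg, Finset.card_image_of_injective _ hcastinj, card_univ, Fintype.card_fin]
  -- membership in T gives fibers in K
  have hmapsK : ∀ i : Fin k, ∀ τ ∈ T, τ (J i) ∈ K := by
    intro i τ hτ
    simp only [hT, mem_filter, mem_univ, true_and] at hτ
    simp only [hKdef, mem_filter, mem_univ, true_and]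
    exact hτ i
  -- all fibers have the same cardinality
  have fib_eq : ∀ (i : Fin k) (t t' : Fin N), (t : ℕ) < k → (t' : ℕ) < k →
      (T.filter (fun τ => τ (J i) = t)).card = (T.filter (fun τ => τ (J i) = t')).card := by
    intro i t t' ht ht'
    have hswapT : ∀ τ ∈ T, Equiv.swap t t' * τ ∈ T := by
      intro τ hτ
      simp only [hT, mem_filter, mem_univ, true_and] at hτ ⊢
      intro i'
      rw [Equiv.Perm.mul_apply, Equiv.swap_apply_def]
      split_ifs with h1 h2
      · exact ht'
      · exact ht
      · exact hτ i'
    refine Finset.card_bij' (fun τ _ => Equiv.swap t t' * τ) (fun τ _ => Equiv.swap t t' * τ)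
      ?_ ?_ ?_ ?_
    · intro τ hτ
      simp only [mem_filter] at hτ ⊢
      exact ⟨hswapT τ hτ.1, by rw [Equiv.Perm.mul_apply, hτ.2, Equiv.swap_apply_left]⟩
    · intro τ hτ
      simp only [mem_filter] at hτ ⊢
      exact ⟨hswapT τ hτ.1, by rw [Equiv.Perm.mul_apply, hτ.2, Equiv.swap_apply_right]⟩
    · intro τ _
      show Equiv.swap t t' * (Equiv.swap t t' * τ) = τ
      rw [← mul_assoc, Equiv.swap_mul_self, one_mul]
    · intro τ _
      show Equiv.swap t t' * (Equiv.swap t t' * τ) = τ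
      rw [← mul_assoc, Equiv.swap_mul_self, one_mul]
  -- fiber cardinality : k * fib = T.card
  have fib_card : ∀ (i : Fin k) (t : Fin N), t ∈ K →
      ((T.filter (fun τ => τ (J i) = t)).card : ℝ) = (T.card : ℝ) / k := by
    intro i t ht
    have h1 : T.card = ∑ t' ∈ K, (T.filter (fun τ => τ (J i) = t')).card :=
      Finset.card_eq_sum_card_fiberwise (hmapsK i)
    have ht' : (t : ℕ) < k := by simpa [hKdef] using ht
    have h2 : ∀ t' ∈ K, (T.filter (fun τ => τ (J i) = t')).card
        = (T.filter (fun τ => τ (J i) = t)).card := by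
      intro t' htt'
      have : (t' : ℕ) < k := by simpa [hKdef] using htt'
      exact fib_eq i t' t this ht'
    rw [Finset.sum_congr rfl h2, Finset.sum_const, hKcard, smul_eq_mul] at h1
    field_simp
    rw [mul_comm]
    exact_mod_cast h1.symm
  -- the convex combination identity
  have hident : ∀ σ : Equiv.Perm (Fin N),
      ∑ τ ∈ T, (T.card : ℝ)⁻¹ • (∑ i, c (σ (τ (J i))))
        = ∑ i, c (σ (Fin.castLE hk i)) := by
    intro σ
    funext x
    simp only [Finset.sum_apply, Pi.smul_apply, smul_eq_mul]
    rw [← Finset.mul_sum, Finset.sum_comm]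
    have h1 : ∀ i : Fin k, ∑ τ ∈ T, c (σ (τ (J i))) x
        = (T.card : ℝ) / k * ∑ t ∈ K, c (σ t) x := by
      intro i
      rw [← Finset.sum_fiberwise_of_maps_to (hmapsK i) (fun τ => c (σ (τ (J i))) x),
        Finset.mul_sum]
      refine Finset.sum_congr rfl fun t ht => ?_
      have : ∀ τ ∈ T.filter (fun τ => τ (J i) = t), c (σ (τ (J i))) x = c (σ t) x := by
        intro τ hτ
        simp only [mem_filter] at hτ
        rw [hτ.2]
      rw [Finset.sum_congr rfl this, Finset.sum_const, nsmul_eq_mul, fib_card i t ht]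
    rw [Finset.sum_congr rfl (fun i _ => h1 i), Finset.sum_const, card_univ,
      Fintype.card_fin, nsmul_eq_mul]
    have hsumK : ∑ t ∈ K, c (σ t) x = ∑ i : Fin k, c (σ (Fin.castLE hk i)) x := by
      rw [hKimg, Finset.sum_image (fun a _ b _ h => hcastinj h)]
    rw [hsumK]
    field_simp
  -- Jensen step
  have jensen : ∀ σ : Equiv.Perm (Fin N),
      f (∑ i, c (σ (Fin.castLE hk i)))
        ≤ ∑ τ ∈ T, (T.card : ℝ)⁻¹ * f (∑ i, c (σ (τ (J i)))) := by
    intro σ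
    rw [← hident σ]
    have h₀ : ∀ τ ∈ T, (0:ℝ) ≤ (T.card : ℝ)⁻¹ := fun _ _ => by positivity
    have h₁ : ∑ _τ ∈ T, (T.card : ℝ)⁻¹ = 1 := by
      rw [Finset.sum_const, nsmul_eq_mul, mul_inv_cancel₀ hTR]
    have hmem : ∀ τ ∈ T, (∑ i, c (σ (τ (J i)))) ∈ (Set.univ : Set (Fin d → ℝ)) :=
      fun _ _ => Set.mem_univ _
    simpa using hf.map_sum_le h₀ h₁ hmem
  -- sum over σ and reindex
  calc ∑ σ : Equiv.Perm (Fin N), f (∑ i, c (σ (Fin.castLE hk i)))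
      ≤ ∑ σ : Equiv.Perm (Fin N), ∑ τ ∈ T, (T.card : ℝ)⁻¹ * f (∑ i, c (σ (τ (J i)))) :=
        Finset.sum_le_sum fun σ _ => jensen σ
    _ = ∑ τ ∈ T, (T.card : ℝ)⁻¹ * ∑ σ : Equiv.Perm (Fin N), f (∑ i, c (σ (τ (J i)))) := by
        rw [Finset.sum_comm]
        exact Finset.sum_congr rfl fun τ _ => by rw [Finset.mul_sum]
    _ = ∑ τ ∈ T, (T.card : ℝ)⁻¹ * ∑ σ : Equiv.Perm (Fin N), f (∑ i, c (σ (J i))) := by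
        refine Finset.sum_congr rfl fun τ _ => ?_
        congr 1
        have := Fintype.sum_bijective (fun σ : Equiv.Perm (Fin N) => σ * τ)
          (Group.mulRight_bijective τ)
          (fun σ => f (∑ i, c (σ (τ (J i)))))
          (fun σ => f (∑ i, c (σ (J i))))
          (fun σ => by simp [Equiv.Perm.mul_apply])
        exact this
    _ = ∑ σ : Equiv.Perm (Fin N), f (∑ i, c (σ (J i))) := by
        rw [Finset.sum_const, nsmul_eq_mul, ← mul_assoc, mul_inv_cancel₀ hTR, one_mul]
/-- Hoeffding's comparison: for a convex f, the expectation of f of the sum of a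
sample drawn uniformly without replacement is at most that of a sample drawn
with replacement. -/
theorem hoeffding_sampling_without_replacement (N k d : ℕ) (hN : 0 < N) (hk : k ≤ N)
    (c : Fin N → (Fin d → ℝ)) (f : (Fin d → ℝ) → ℝ)
    (hf : ConvexOn ℝ Set.univ f) :
    (∑ π ∈ Finset.univ.filter (fun π : Fin k → Fin N => Function.Injective π),
        f (∑ i, c (π i)))
      / ((Finset.univ.filter (fun π : Fin k → Fin N => Function.Injective π)).card : ℝ)
    ≤ (∑ π : Fin k → Fin N, f (∑ i, c (π i))) / ((N : ℝ) ^ k) := by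
  classical
  rcases Nat.eq_zero_or_pos k with hk0 | hk0
  · subst hk0
    have hA : (univ.filter (fun π : Fin 0 → Fin N => Function.Injective π)) = univ := by
      refine Finset.filter_true_of_mem fun π _ => ?_
      intro a
      exact absurd a.2 (Nat.not_lt_zero _)
    rw [hA]
    simp
  · obtain ⟨M, hM, hMsum⟩ := sum_perm_fiber hk
    set A : Finset (Fin k → Fin N) :=
      univ.filter (fun π : Fin k → Fin N => Function.Injective π) with hA
    set SA : ℝ := ∑ π ∈ A, f (∑ i, c (π i)) with hSA
    set Sall : ℝ := ∑ π : Fin k → Fin N, f (∑ i, c (π i)) with hSall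
    have hApos : 0 < A.card := by
      refine Finset.card_pos.2 ⟨Fin.castLE hk, ?_⟩
      simp only [hA, mem_filter, mem_univ, true_and]
      exact Fin.castLE_injective hk
    -- step 1
    have h2 : (N:ℝ)^k * (∑ σ : Equiv.Perm (Fin N), f (∑ i, c (σ (Fin.castLE hk i))))
        ≤ ∑ J : Fin k → Fin N, ∑ σ : Equiv.Perm (Fin N), f (∑ i, c (σ (J i))) := by
      have hcard : ((univ : Finset (Fin k → Fin N)).card : ℝ) = (N:ℝ)^k := by
        rw [card_univ, Fintype.card_fun, Fintype.card_fin, Fintype.card_fin, Nat.cast_pow]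
      calc (N:ℝ)^k * (∑ σ : Equiv.Perm (Fin N), f (∑ i, c (σ (Fin.castLE hk i))))
          = ∑ _J : Fin k → Fin N, ∑ σ : Equiv.Perm (Fin N), f (∑ i, c (σ (Fin.castLE hk i))) := by
            rw [Finset.sum_const, nsmul_eq_mul, ← hcard]
        _ ≤ _ := Finset.sum_le_sum fun J _ => main_ineq hk hk0 c f hf J
    -- step 2: reindex
    have h3 : ∑ J : Fin k → Fin N, ∑ σ : Equiv.Perm (Fin N), f (∑ i, c (σ (J i)))
        = (Fintype.card (Equiv.Perm (Fin N)) : ℝ) * Sall := by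
      rw [Finset.sum_comm]
      have hinner : ∀ σ : Equiv.Perm (Fin N),
          ∑ J : Fin k → Fin N, f (∑ i, c (σ (J i))) = Sall := by
        intro σ
        have hbij : Function.Bijective (fun J : Fin k → Fin N => fun i => σ (J i)) := by
          constructor
          · intro a b h
            funext i
            exact σ.injective (congrFun h i)
          · intro π
            exact ⟨fun i => σ.symm (π i), funext fun i => by simp⟩
        exact Fintype.sum_bijective _ hbij _ _ (fun J => rfl)
      rw [Finset.sum_congr rfl fun σ _ => hinner σ, Finset.sum_const, card_univ, nsmul_eq_mul]
    -- step 3: fibers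
    have h4 : ∑ σ : Equiv.Perm (Fin N), f (∑ i, c (σ (Fin.castLE hk i))) = (M:ℝ) * SA := by
      have := hMsum (fun π => f (∑ i, c (π i)))
      simpa [Function.comp, nsmul_eq_mul] using this
    have h5 : (Fintype.card (Equiv.Perm (Fin N)) : ℝ) = (M:ℝ) * A.card := by
      have := hMsum (fun _ => (1:ℝ))
      simpa [Finset.sum_const, nsmul_eq_mul, card_univ] using this
    rw [h3, h4, h5] at h2
    -- cancel M
    have hMp : (0:ℝ) < M := Nat.cast_pos.2 hM
    have h6 : (N:ℝ)^k * SA ≤ (A.card : ℝ) * Sall := by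
      have h7 : (M:ℝ) * ((N:ℝ)^k * SA) ≤ (M:ℝ) * ((A.card : ℝ) * Sall) := by ring_nf; ring_nf at h2; linarith
      exact le_of_mul_le_mul_left h7 hMp
    have hNk : (0:ℝ) < (N:ℝ)^k := by positivity
    have hAc : (0:ℝ) < (A.card : ℝ) := Nat.cast_pos.2 hApos
    rw [div_le_div_iff₀ hAc hNk]
    linarith [h6]
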